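/- Let X ⊆ Y and Z be finite sets of variables, and for each finite set U of variables let R_U be a finite set of functions with domain U, such that for all U ⊆ W the projection π_U maps R_W into R_U. Suppose moreover that R_{Y∪Z} ⊆ R_Y ⋈ R_Z (every function in R_{Y∪Z} is the join of its restrictions to Y and Z, which lie in R_Y and R_Z). Then maxdeg(X, Y) ≥ maxdeg(X ∪ Z, Y ∪ Z), where maxdeg(U, W) := max_{g ∈ R_U} |{h ∈ R_W : π_U(h) = g}| (with the convention maxdeg = 0 if R_U is empty). -/

import Mathlib

/-- Functions with domain `U ⊆ V` are modelled as total functions `V → β`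
that take the value `default` outside of `U`; `proj U f` is the restriction. -/
theorem maxdeg_antitone_join {V β : Type*} [DecidableEq V] [DecidableEq (V → β)] [Inhabited β]
    (proj : Finset V → (V → β) → (V → β))
    (hproj : ∀ (U : Finset V) (f : V → β),
        proj U f = fun v => if v ∈ U then f v else default)
    (R : Finset V → Finset (V → β))
    (hsupp : ∀ (U : Finset V), ∀ f ∈ R U, proj U f = f)
    (hclosed : ∀ (U W : Finset V), U ⊆ W → ∀ f ∈ R W, proj U f ∈ R U)
    (X Y Z : Finset V) (hXY : X ⊆ Y)
    (hjoin : ∀ f ∈ R (Y ∪ Z), proj Y f ∈ R Y ∧ proj Z f ∈ R Z)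
    (maxdeg : Finset V → Finset V → ℕ)
    (hmaxdeg : ∀ (U W : Finset V),
        maxdeg U W = (R U).sup (fun g => ((R W).filter (fun h => proj U h = g)).card)) :
    maxdeg X Y ≥ maxdeg (X ∪ Z) (Y ∪ Z) := by
  rw [hmaxdeg, hmaxdeg]
  apply Finset.sup_le
  intro g hg
  have hgX : proj X g ∈ R X := hclosed X (X ∪ Z) Finset.subset_union_left g hg
  calc ((R (Y ∪ Z)).filter (fun h => proj (X ∪ Z) h = g)).card
      ≤ ((R Y).filter (fun h => proj X h = proj X g)).card := by
        apply Finset.card_le_card_of_injOn (fun h => proj Y h)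
        · intro h hh
          change h ∈ (R (Y ∪ Z)).filter (fun h => proj (X ∪ Z) h = g) at hh
          change proj Y h ∈ (R Y).filter (fun h => proj X h = proj X g)
          simp only [Finset.mem_filter] at hh ⊢
          obtain ⟨hhR, hhp⟩ := hh
          refine ⟨(hjoin h hhR).1, ?_⟩
          funext v
          by_cases hvX : v ∈ X
          · have hg' : g v = h v := by
              rw [← hhp, hproj]
              simp [Finset.mem_union, hvX]
            simp [hproj, hvX, hXY hvX, hg']
          · simp [hproj, hvX]
        · intro h1 hh1 h2 hh2 heq
          simp only [Finset.mem_coe, Finset.mem_filter] at hh1 hh2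
          funext v
          by_cases hvY : v ∈ Y
          · have e1 := congrFun heq v
            simp only [hproj, hvY, if_true] at e1
            exact e1
          · by_cases hvZ : v ∈ Z
            · have e1 : g v = h1 v := by
                rw [← hh1.2, hproj]; simp [Finset.mem_union, hvZ]
              have e2 : g v = h2 v := by
                rw [← hh2.2, hproj]; simp [Finset.mem_union, hvZ]
              rw [← e1, ← e2]
            · have e1 : h1 v = default := by
                conv_lhs => rw [← hsupp _ _ hh1.1, hproj]
                simp [Finset.mem_union, hvY, hvZ]
              have e2 : h2 v = default := by
                conv_lhs => rw [← hsupp _ _ hh2.1, hproj]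
                simp [Finset.mem_union, hvY, hvZ]
              rw [e1, e2]
    _ ≤ _ := Finset.le_sup (f := fun g' => ((R Y).filter (fun h => proj X h = g')).card) hgX
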